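/- Let ρ₀ > 0, μ ≠ 0, and b ∈ ℝ, and define ρ(θ,ψ) = ρ₀ e^{μθ + bψ}. Then the surface defined by ρ is not equiangular: there is no β such that the angle between N(θ,ψ) and X(θ,ψ) equals β for all θ ∈ ℝ and all ψ ∈ (−π/2, π/2). -/

import Mathlib

open Real

/-- The surface map `X(θ,ψ) = ρ(θ,ψ)·(cos ψ cos θ, cos ψ sin θ, sin ψ)`. -/
noncomputable def Xsurf (ρ : ℝ → ℝ → ℝ) (θ ψ : ℝ) : EuclideanSpace ℝ (Fin 3) :=
  WithLp.toLp 2 ![ρ θ ψ * Real.cos ψ * Real.cos θ, ρ θ ψ * Real.cos ψ * Real.sin θ, ρ θ ψ * Real.sin ψ]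

/-- The normal vector `N = X_θ × X_ψ`. -/
noncomputable def Nsurf (ρ : ℝ → ℝ → ℝ) (θ ψ : ℝ) : EuclideanSpace ℝ (Fin 3) :=
  WithLp.toLp 2 (crossProduct (deriv (fun t => Xsurf ρ t ψ) θ) (deriv (fun s => Xsurf ρ θ s) ψ))

lemma hasDerivAt_vec3 {f g h : ℝ → ℝ} {f' g' h' : ℝ} {x : ℝ}
    (hf : HasDerivAt f f' x) (hg : HasDerivAt g g' x) (hh : HasDerivAt h h' x) :
    HasDerivAt (fun t => (![f t, g t, h t] : Fin 3 → ℝ)) ![f', g', h'] x := by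
  refine hasDerivAt_pi.2 fun i => ?_
  fin_cases i <;> simpa

lemma hasDerivAt_rho (ρ₀ μ b ψ θ : ℝ) :
    HasDerivAt (fun t => ρ₀ * Real.exp (μ * t + b * ψ))
      (ρ₀ * Real.exp (μ * θ + b * ψ) * μ) θ := by
  have h1 : HasDerivAt (fun t : ℝ => μ * t + b * ψ) μ θ := by
    simpa using ((hasDerivAt_id θ).const_mul μ).add_const (b * ψ)
  simpa [mul_assoc] using (h1.exp.const_mul ρ₀)

lemma hasDerivAt_Xtheta (ρ₀ μ b θ ψ : ℝ) :
    HasDerivAt (F := Fin 3 → ℝ) (fun t => Xsurf (fun θ ψ => ρ₀ * Real.exp (μ * θ + b * ψ)) t ψ)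
      (![ρ₀ * Real.exp (μ * θ + b * ψ) * (Real.cos ψ * (μ * Real.cos θ - Real.sin θ)),
         ρ₀ * Real.exp (μ * θ + b * ψ) * (Real.cos ψ * (μ * Real.sin θ + Real.cos θ)),
         ρ₀ * Real.exp (μ * θ + b * ψ) * (μ * Real.sin ψ)] : Fin 3 → ℝ) θ := by
  unfold Xsurf
  refine hasDerivAt_vec3 ?_ ?_ ?_
  · have := ((hasDerivAt_rho ρ₀ μ b ψ θ).mul_const (Real.cos ψ)).fun_mul (Real.hasDerivAt_cos θ)
    exact this.congr_deriv (by ring)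
  · have := ((hasDerivAt_rho ρ₀ μ b ψ θ).mul_const (Real.cos ψ)).fun_mul (Real.hasDerivAt_sin θ)
    exact this.congr_deriv (by ring)
  · have := (hasDerivAt_rho ρ₀ μ b ψ θ).mul_const (Real.sin ψ)
    exact this.congr_deriv (by ring)

lemma hasDerivAt_rho2 (ρ₀ μ b θ ψ : ℝ) :
    HasDerivAt (fun s => ρ₀ * Real.exp (μ * θ + b * s))
      (ρ₀ * Real.exp (μ * θ + b * ψ) * b) ψ := by
  have h1 : HasDerivAt (fun s : ℝ => μ * θ + b * s) b ψ := by
    simpa using (((hasDerivAt_id ψ).const_mul b).const_add (μ * θ))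
  simpa [mul_assoc] using (h1.exp.const_mul ρ₀)

lemma hasDerivAt_Xpsi (ρ₀ μ b θ ψ : ℝ) :
    HasDerivAt (F := Fin 3 → ℝ) (fun s => Xsurf (fun θ ψ => ρ₀ * Real.exp (μ * θ + b * ψ)) θ s)
      (![ρ₀ * Real.exp (μ * θ + b * ψ) * ((b * Real.cos ψ - Real.sin ψ) * Real.cos θ),
         ρ₀ * Real.exp (μ * θ + b * ψ) * ((b * Real.cos ψ - Real.sin ψ) * Real.sin θ),
         ρ₀ * Real.exp (μ * θ + b * ψ) * (b * Real.sin ψ + Real.cos ψ)] : Fin 3 → ℝ) ψ := by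
  unfold Xsurf
  refine hasDerivAt_vec3 ?_ ?_ ?_
  · have := (((hasDerivAt_rho2 ρ₀ μ b θ ψ).fun_mul (Real.hasDerivAt_cos ψ)).mul_const (Real.cos θ))
    exact this.congr_deriv (by ring)
  · have := (((hasDerivAt_rho2 ρ₀ μ b θ ψ).fun_mul (Real.hasDerivAt_cos ψ)).mul_const (Real.sin θ))
    exact this.congr_deriv (by ring)
  · have := ((hasDerivAt_rho2 ρ₀ μ b θ ψ).fun_mul (Real.hasDerivAt_sin ψ))
    exact this.congr_deriv (by ring)

lemma Nsurf_eq (ρ₀ μ b θ ψ : ℝ) :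
    Nsurf (fun θ ψ => ρ₀ * Real.exp (μ * θ + b * ψ)) θ ψ =
      WithLp.toLp 2 (crossProduct
        (![ρ₀ * Real.exp (μ * θ + b * ψ) * (Real.cos ψ * (μ * Real.cos θ - Real.sin θ)),
           ρ₀ * Real.exp (μ * θ + b * ψ) * (Real.cos ψ * (μ * Real.sin θ + Real.cos θ)),
           ρ₀ * Real.exp (μ * θ + b * ψ) * (μ * Real.sin ψ)])
        (![ρ₀ * Real.exp (μ * θ + b * ψ) * ((b * Real.cos ψ - Real.sin ψ) * Real.cos θ),
           ρ₀ * Real.exp (μ * θ + b * ψ) * ((b * Real.cos ψ - Real.sin ψ) * Real.sin θ),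
           ρ₀ * Real.exp (μ * θ + b * ψ) * (b * Real.sin ψ + Real.cos ψ)])) := by
  unfold Nsurf
  rw [(hasDerivAt_Xtheta ρ₀ μ b θ ψ).deriv, (hasDerivAt_Xpsi ρ₀ μ b θ ψ).deriv]

lemma angleA (ρ₀ μ b : ℝ) (hρ₀ : 0 < ρ₀) :
    InnerProductGeometry.angle
        (Nsurf (fun θ ψ => ρ₀ * Real.exp (μ * θ + b * ψ)) 0 0)
        (Xsurf (fun θ ψ => ρ₀ * Real.exp (μ * θ + b * ψ)) 0 0)
      = Real.arccos (1 / Real.sqrt (μ^2 + b^2 + 1)) := by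
  rw [Nsurf_eq, cross_apply]
  unfold Xsurf
  simp only [InnerProductGeometry.angle, PiLp.inner_apply, PiLp.toLp_apply, RCLike.inner_apply, conj_trivial,
    EuclideanSpace.norm_eq, Fin.sum_univ_three, Matrix.cons_val_zero, Matrix.cons_val_one,
    Matrix.head_cons, Matrix.cons_val_two, Matrix.tail_cons, Real.norm_eq_abs, sq_abs,
    Real.cos_zero, Real.sin_zero, mul_zero, zero_mul, mul_one, add_zero, zero_add, sub_zero,
    zero_sub, Real.exp_zero]
  congr 1
  have h1 : (ρ₀*ρ₀)^2 + (-(ρ₀*(1*μ)*ρ₀))^2 + (-(ρ₀*(ρ₀*b)))^2 = (ρ₀^2)^2 * (μ^2+b^2+1) := by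
    ring
  have h2 : ρ₀^2 + (0:ℝ)^2 + 0^2 = ρ₀^2 := by ring
  rw [h1, h2, Real.sqrt_mul (by positivity), Real.sqrt_sq (by positivity), Real.sqrt_sq hρ₀.le]
  have hS : Real.sqrt (μ^2+b^2+1) ≠ 0 := by positivity
  field_simp

lemma angleB (ρ₀ μ b : ℝ) (hρ₀ : 0 < ρ₀) :
    InnerProductGeometry.angle
        (Nsurf (fun θ ψ => ρ₀ * Real.exp (μ * θ + b * ψ)) 0 (π/3))
        (Xsurf (fun θ ψ => ρ₀ * Real.exp (μ * θ + b * ψ)) 0 (π/3))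
      = Real.arccos (1 / Real.sqrt (4*μ^2 + b^2 + 1)) := by
  rw [Nsurf_eq, cross_apply]
  unfold Xsurf
  simp only [InnerProductGeometry.angle, PiLp.inner_apply, PiLp.toLp_apply, RCLike.inner_apply, conj_trivial,
    EuclideanSpace.norm_eq, Fin.sum_univ_three, Matrix.cons_val_zero, Matrix.cons_val_one,
    Matrix.head_cons, Matrix.cons_val_two, Matrix.tail_cons, Real.norm_eq_abs, sq_abs,
    Real.cos_zero, Real.sin_zero, Real.cos_pi_div_three, Real.sin_pi_div_three,
    mul_zero, zero_mul, mul_one, add_zero, zero_add, sub_zero, zero_sub]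
  set R := ρ₀ * rexp (b * (π / 3)) with hRdef
  have hR : 0 < R := by rw [hRdef]; positivity
  have hs : Real.sqrt 3 ^ 2 = 3 := Real.sq_sqrt (by norm_num)
  set s := Real.sqrt 3 with hsdef
  congr 1
  have e1 : (R * (1 / 2) * (R * (1 / 2) * (R * (b * (s / 2) + 1 / 2))) +
        R * (s / 2) * -(R * (1 / 2) * (R * (b * (1 / 2) - s / 2)))) = R^3 * (1/2) := by
    linear_combination (R^3/8) * hs
  have e2 : ((R * (1 / 2) * (R * (b * (s / 2) + 1 / 2))) ^ 2 +
              (R * (μ * (s / 2)) * (R * (b * (1 / 2) - s / 2)) - R * (1 / 2 * μ) * (R * (b * (s / 2) + 1 / 2))) ^ 2 +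
            (-(R * (1 / 2) * (R * (b * (1 / 2) - s / 2)))) ^ 2)
      = (R^2/2)^2 * (4 * μ^2 + b^2 + 1) := by
    linear_combination (R^4/16 * ((b^2+1) + μ^2*(s^2+5))) * hs
  have e3 : ((R * (1 / 2)) ^ 2 + (0:ℝ) ^ 2 + (R * (s / 2)) ^ 2) = R^2 := by
    linear_combination (R^2/4) * hs
  rw [e1, e2, e3, Real.sqrt_mul (by positivity), Real.sqrt_sq (by positivity),
    Real.sqrt_sq hR.le]
  have hT : Real.sqrt (4 * μ^2 + b^2 + 1) ≠ 0 := by positivity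
  field_simp

/-- A self-similar surface `ρ(θ,ψ) = ρ₀ e^{μθ + bψ}` with `μ ≠ 0` is not equiangular:
there is no `β` such that the angle between `N` and `X` equals `β` at every point of the
strip `ℝ × (−π/2, π/2)`. -/
theorem selfSimilar_not_equiangular (ρ₀ μ b : ℝ) (hρ₀ : 0 < ρ₀) (hμ : μ ≠ 0) :
    ¬ ∃ β : ℝ, ∀ θ : ℝ, ∀ ψ ∈ Set.Ioo (-(π / 2)) (π / 2),
      InnerProductGeometry.angle
        (Nsurf (fun θ ψ => ρ₀ * Real.exp (μ * θ + b * ψ)) θ ψ)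
        (Xsurf (fun θ ψ => ρ₀ * Real.exp (μ * θ + b * ψ)) θ ψ) = β := by
  rintro ⟨β, h⟩
  have hπ := Real.pi_pos
  have hA := h 0 0 ⟨by linarith, by linarith⟩
  have hB := h 0 (π/3) ⟨by linarith, by linarith⟩
  rw [angleA ρ₀ μ b hρ₀] at hA
  rw [angleB ρ₀ μ b hρ₀] at hB
  have key : Real.arccos (1 / Real.sqrt (μ^2 + b^2 + 1))
      = Real.arccos (1 / Real.sqrt (4*μ^2 + b^2 + 1)) := hA.trans hB.symm
  have hS1 : (1:ℝ) ≤ μ^2 + b^2 + 1 := by nlinarith [sq_nonneg μ, sq_nonneg b]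
  have hS2 : (1:ℝ) ≤ 4*μ^2 + b^2 + 1 := by nlinarith [sq_nonneg μ, sq_nonneg b]
  have hs1 : (1:ℝ) ≤ Real.sqrt (μ^2 + b^2 + 1) := by
    simpa using Real.sqrt_le_sqrt hS1
  have hs2 : (1:ℝ) ≤ Real.sqrt (4*μ^2 + b^2 + 1) := by
    simpa using Real.sqrt_le_sqrt hS2
  have q1 : (1:ℝ) / Real.sqrt (μ^2 + b^2 + 1) = 1 / Real.sqrt (4*μ^2 + b^2 + 1) := by
    have p1 : (0:ℝ) ≤ 1 / Real.sqrt (μ^2 + b^2 + 1) := by positivity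
    have p2 : (0:ℝ) ≤ 1 / Real.sqrt (4*μ^2 + b^2 + 1) := by positivity
    have c1 := Real.cos_arccos (x := 1 / Real.sqrt (μ^2 + b^2 + 1))
      (by linarith) (by rw [div_le_one (by linarith)]; linarith)
    have c2 := Real.cos_arccos (x := 1 / Real.sqrt (4*μ^2 + b^2 + 1))
      (by linarith) (by rw [div_le_one (by linarith)]; linarith)
    calc 1 / Real.sqrt (μ^2 + b^2 + 1) = _ := c1.symm
      _ = Real.cos (Real.arccos (1 / Real.sqrt (4*μ^2 + b^2 + 1))) := by rw [key]
      _ = _ := c2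
  have q2 : Real.sqrt (μ^2 + b^2 + 1) = Real.sqrt (4*μ^2 + b^2 + 1) := by
    field_simp at q1
    rw [show (4:ℝ)*μ^2 + b^2 + 1 = μ^2*4 + b^2 + 1 by ring, q1]
  have q3 : μ^2 + b^2 + 1 = 4*μ^2 + b^2 + 1 := by
    have := congrArg (fun x => x^2) q2
    simpa [Real.sq_sqrt (by positivity : (0:ℝ) ≤ μ^2+b^2+1),
      Real.sq_sqrt (by positivity : (0:ℝ) ≤ 4*μ^2+b^2+1)] using this
  have : μ^2 = 0 := by linarith
  exact hμ (by simpa using pow_eq_zero_iff (n := 2) (by norm_num) |>.mp this)
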